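/- Let K be a finite n-dimensional simplicial complex. For ε ∈ C^0(K), define χ̃(ε) = Σ_{p=0}^{n−1} (−1)^p f̃_p(ε) where f̃_p(ε) is the number of (p+1)-simplices of K on which ε is not constant. Then E_ν(χ̃) + χ(K) = ν q_K(−ν) + (1−ν) q_K(ν−1), where χ(K) = Σ_p (−1)^p f_p(K) and q_K(T) = Σ_p f_p(K) T^p. -/

import Mathlib

/-- A finite (abstract) simplicial complex on the vertex type `V`. -/
structure SC (V : Type*) where
  faces : Finset (Finset V)
  down_closed : ∀ σ ∈ faces, ∀ τ ⊆ σ, τ ∈ faces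

/-- `f_p(K)`: the number of `p`-dimensional simplices of `K`. -/
def fcount {V : Type*} (K : SC V) (p : ℕ) : ℕ :=
  (K.faces.filter fun σ => σ.card = p + 1).card

/-- The face polynomial `q_K(T) = Σ_{p=0}^n f_p(K) T^p` evaluated at `T`. -/
def facePoly {V : Type*} (K : SC V) (n : ℕ) (T : ℝ) : ℝ :=
  ∑ p ∈ Finset.range (n + 1), (fcount K p : ℝ) * T ^ p

/-- `f̃_p(ε)`: the number of `(p+1)`-simplices of `K` on which `ε` is not constant. -/
def ftilde {V : Type*} [DecidableEq V] (K : SC V) (ε : V → ZMod 2) (p : ℕ) : ℕ :=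
  (K.faces.filter fun σ => σ.card = p + 2 ∧ ∃ v ∈ σ, ∃ w ∈ σ, ε v ≠ ε w).card

section helpers

variable {V : Type*} [DecidableEq V] [Fintype V]

lemma zmod2_sum (f : ZMod 2 → ℝ) : ∑ x : ZMod 2, f x = f 0 + f 1 :=
  Fin.sum_univ_two f

lemma zmod2_cases : ∀ x : ZMod 2, x = 0 ∨ x = 1 := by decide

lemma sumA (ν : ℝ) (σ : Finset V) (c : ZMod 2) :
    ∑ ε : V → ZMod 2, (∏ v : V, if ε v = 0 then ν else 1 - ν) *
      (if ∀ v ∈ σ, ε v = c then (1:ℝ) else 0)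
    = (if c = 0 then ν else 1 - ν) ^ σ.card := by
  have key : ∀ ε : V → ZMod 2,
      (∏ v : V, if ε v = 0 then ν else 1 - ν) * (if ∀ v ∈ σ, ε v = c then (1:ℝ) else 0)
      = ∏ v : V, ((if ε v = 0 then ν else 1 - ν) *
          (if v ∈ σ then (if ε v = c then (1:ℝ) else 0) else 1)) := by
    intro ε
    rw [Finset.prod_mul_distrib]
    congr 1
    rw [Fintype.prod_ite_mem σ (fun v => if ε v = c then (1:ℝ) else 0),
      Finset.prod_boole]
    congr 1
  simp_rw [key]
  have hps := Fintype.prod_sum (κ := fun _ : V => ZMod 2)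
    (fun v x => (if x = 0 then ν else 1 - ν) *
      (if v ∈ σ then (if x = c then (1:ℝ) else 0) else 1))
  rw [← hps]
  have inner : ∀ v : V,
      (∑ x : ZMod 2, (if x = 0 then ν else 1 - ν) *
        (if v ∈ σ then (if x = c then (1:ℝ) else 0) else 1))
      = if v ∈ σ then (if c = 0 then ν else 1 - ν) else 1 := by
    intro v
    rw [zmod2_sum]
    by_cases hv : v ∈ σ
    · rcases zmod2_cases c with hc | hc <;> subst hc <;> simp [hv]
    · simp [hv]
  simp_rw [inner]
  rw [Fintype.prod_ite_mem σ (fun _ => if c = 0 then ν else 1 - ν), Finset.prod_const]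

lemma sumP (ν : ℝ) :
    ∑ ε : V → ZMod 2, (∏ v : V, if ε v = 0 then ν else 1 - ν) = 1 := by
  have := sumA (V := V) ν ∅ 0
  simpa using this

lemma sumB (ν : ℝ) (σ : Finset V) (hσ : σ.Nonempty) :
    ∑ ε : V → ZMod 2, (∏ v : V, if ε v = 0 then ν else 1 - ν) *
      (if ∃ v ∈ σ, ∃ w ∈ σ, ε v ≠ ε w then (1:ℝ) else 0)
    = 1 - ν ^ σ.card - (1 - ν) ^ σ.card := by
  obtain ⟨u, hu⟩ := hσ
  have hpt : ∀ ε : V → ZMod 2,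
      (if ∃ v ∈ σ, ∃ w ∈ σ, ε v ≠ ε w then (1:ℝ) else 0)
      = 1 - (if ∀ v ∈ σ, ε v = 0 then (1:ℝ) else 0)
          - (if ∀ v ∈ σ, ε v = 1 then (1:ℝ) else 0) := by
    intro ε
    by_cases h0 : ∀ v ∈ σ, ε v = 0
    · have hne : ¬ ∃ v ∈ σ, ∃ w ∈ σ, ε v ≠ ε w := by
        rintro ⟨v, hv, w, hw, h⟩
        exact h ((h0 v hv).trans (h0 w hw).symm)
      have h1' : ¬ ∀ v ∈ σ, ε v = 1 := by
        intro h1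
        have := (h0 u hu).symm.trans (h1 u hu)
        exact absurd this (by decide)
      rw [if_neg hne, if_pos h0, if_neg h1']; ring
    · by_cases h1 : ∀ v ∈ σ, ε v = 1
      · have hne : ¬ ∃ v ∈ σ, ∃ w ∈ σ, ε v ≠ ε w := by
          rintro ⟨v, hv, w, hw, h⟩
          exact h ((h1 v hv).trans (h1 w hw).symm)
        rw [if_neg hne, if_neg h0, if_pos h1]; ring
      · have he : ∃ v ∈ σ, ∃ w ∈ σ, ε v ≠ ε w := by
          push_neg at h0 h1
          obtain ⟨v, hv, hv0⟩ := h0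
          obtain ⟨w, hw, hw1⟩ := h1
          have hv1 : ε v = 1 := (zmod2_cases (ε v)).resolve_left hv0
          have hw0 : ε w = 0 := (zmod2_cases (ε w)).resolve_right hw1
          refine ⟨v, hv, w, hw, ?_⟩
          rw [hv1, hw0]; decide
        rw [if_pos he, if_neg h0, if_neg h1]; ring
  simp_rw [hpt, mul_sub, mul_one]
  rw [Finset.sum_sub_distrib, Finset.sum_sub_distrib, sumP, sumA, sumA]
  norm_num

end helpers

/-- with `χ̃(ε) = Σ_{p=0}^{n-1} (-1)^p f̃_p(ε)` and
`χ(K) = Σ_{p=0}^n (-1)^p f_p(K)`, one has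
`E_ν(χ̃) + χ(K) = ν q_K(-ν) + (1-ν) q_K(ν-1)`. -/
theorem stmt7 (V : Type*) [DecidableEq V] [Fintype V] (K : SC V) (n : ℕ)
    (hdim : ∀ σ ∈ K.faces, σ.card ≤ n + 1) (hvert : ∀ v : V, {v} ∈ K.faces)
    (ν : ℝ) (hν0 : 0 ≤ ν) (hν1 : ν ≤ 1) :
    (∑ ε : V → ZMod 2,
        (∏ v : V, if ε v = 0 then ν else 1 - ν) *
        (∑ p ∈ Finset.range n, (-1 : ℝ) ^ p * (ftilde K ε p : ℝ)))
      + (∑ p ∈ Finset.range (n + 1), (-1 : ℝ) ^ p * (fcount K p : ℝ))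
      = ν * facePoly K n (-ν) + (1 - ν) * facePoly K n (ν - 1) := by
  -- express ftilde as a sum of indicators
  have hft : ∀ (ε : V → ZMod 2) (p : ℕ), ((ftilde K ε p : ℝ))
      = ∑ σ ∈ K.faces.filter (fun σ => σ.card = p + 2),
          (if ∃ v ∈ σ, ∃ w ∈ σ, ε v ≠ ε w then (1:ℝ) else 0) := by
    intro ε p
    rw [ftilde, ← Finset.filter_filter, Finset.card_filter]
    push_cast
    rfl
  -- expectation of ftilde
  have hmain : ∀ p : ℕ,
      (∑ ε : V → ZMod 2, (∏ v : V, if ε v = 0 then ν else 1 - ν) * (ftilde K ε p : ℝ))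
      = (fcount K (p+1) : ℝ) * (1 - ν ^ (p+2) - (1-ν) ^ (p+2)) := by
    intro p
    simp_rw [hft, Finset.mul_sum]
    rw [Finset.sum_comm]
    have step : ∀ σ ∈ K.faces.filter (fun σ => σ.card = p + 2),
        (∑ ε : V → ZMod 2, (∏ v : V, if ε v = 0 then ν else 1 - ν) *
          (if ∃ v ∈ σ, ∃ w ∈ σ, ε v ≠ ε w then (1:ℝ) else 0))
        = 1 - ν ^ (p+2) - (1-ν) ^ (p+2) := by
      intro σ hσ
      have hcard : σ.card = p + 2 := (Finset.mem_filter.mp hσ).2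
      have hne : σ.Nonempty := Finset.card_pos.mp (by omega)
      rw [sumB ν σ hne, hcard]
    rw [Finset.sum_congr rfl step, Finset.sum_const, nsmul_eq_mul]
    have : (K.faces.filter (fun σ => σ.card = p + 2)).card = fcount K (p+1) := rfl
    rw [this]
  -- swap the double sum
  have hswap :
      (∑ ε : V → ZMod 2,
        (∏ v : V, if ε v = 0 then ν else 1 - ν) *
        (∑ p ∈ Finset.range n, (-1 : ℝ) ^ p * (ftilde K ε p : ℝ)))
      = ∑ p ∈ Finset.range n,
          (-1:ℝ)^p * ((fcount K (p+1) : ℝ) * (1 - ν ^ (p+2) - (1-ν) ^ (p+2))) := by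
    simp_rw [Finset.mul_sum]
    rw [Finset.sum_comm]
    refine Finset.sum_congr rfl fun p _ => ?_
    simp_rw [mul_left_comm _ ((-1:ℝ)^p)]
    rw [← Finset.mul_sum, hmain p]
  rw [hswap, facePoly, facePoly, Finset.mul_sum, Finset.mul_sum,
    Finset.sum_range_succ' (fun p => (-1:ℝ)^p * (fcount K p : ℝ)) n,
    Finset.sum_range_succ' (fun p => ν * ((fcount K p : ℝ) * (-ν)^p)) n,
    Finset.sum_range_succ' (fun p => (1-ν) * ((fcount K p : ℝ) * (ν-1)^p)) n,
    ← add_assoc, ← Finset.sum_add_distrib]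
  have hterm : ∀ p ∈ Finset.range n,
      ((-1:ℝ)^p * ((fcount K (p+1) : ℝ) * (1 - ν ^ (p+2) - (1-ν) ^ (p+2)))
        + (-1:ℝ)^(p+1) * (fcount K (p+1) : ℝ))
      = (ν * ((fcount K (p+1) : ℝ) * (-ν)^(p+1))
        + (1-ν) * ((fcount K (p+1) : ℝ) * (ν-1)^(p+1))) := by
    intro p _
    have e1 : (-ν)^(p+1) = (-1:ℝ)^(p+1) * ν^(p+1) := by rw [neg_pow]
    have e2 : (ν-1)^(p+1) = (-1:ℝ)^(p+1) * (1-ν)^(p+1) := by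
      rw [show ν - 1 = -(1-ν) by ring, neg_pow]
    rw [e1, e2]; ring
  rw [Finset.sum_congr rfl hterm, Finset.sum_add_distrib]
  ring
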